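/- Let P_{n,k} satisfy P_{1,0} = 1, P_{1,k} = 0 for k ≠ 0, and P_{n+1,k} = C(k+2,2) P_{n,k} + (k+1)(2n-k+1) P_{n,k-1} + C(2n-k+2,2) P_{n,k-2}. Then the polynomial P_n(x) = Σ_k P_{n,k} x^k is γ-positive: there exist nonnegative integers p_{n,k} such that P_n(x) = Σ_{k=0}^{n-1} p_{n,k} x^k (1+x)^{2n-2-2k}. -/

import Mathlib

open Polynomial

noncomputable def bb (s : ℕ) (r : ℤ) : ℝ :=
  if 0 ≤ r ∧ r ≤ (s:ℤ) then (s.choose r.toNat : ℝ) else 0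

lemma bb_neg {s : ℕ} {r : ℤ} (h : r < 0) : bb s r = 0 := by
  unfold bb; rw [if_neg (by omega)]

lemma bb_gt {s : ℕ} {r : ℤ} (h : (s:ℤ) < r) : bb s r = 0 := by
  unfold bb; rw [if_neg (by omega)]

lemma bb_nat {s t : ℕ} {r : ℤ} (hr : r = (t:ℤ)) (h : t ≤ s) : bb s r = (s.choose t : ℝ) := by
  subst hr; unfold bb; rw [if_pos (by constructor <;> omega)]; simp

def pp : ℕ → ℕ → ℕ
  | 0, _ => 0
  | 1, k => if k = 0 then 1 else 0
  | n+2, k => Nat.choose (k+2) 2 * pp (n+1) k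
      + (if k = 0 then 0 else (k+1) * (2*(2*(n+1)-2*k) + 1) * pp (n+1) (k-1))
      + (if k ≤ 1 then 0 else 4 * Nat.choose (2*(n+1)+2-2*k) 2 * pp (n+1) (k-2))

lemma pp_zero : ∀ n k, n ≤ k → pp n k = 0 := by
  intro n
  induction n with
  | zero => intro k _; rfl
  | succ n ih =>
    intro k hk
    match n, hk with
    | 0, hk => simp only [pp]; rw [if_neg (by omega)]
    | (m+1), hk =>
      simp only [pp]
      rw [ih k (by omega), ih (k-1) (by omega)]
      rcases Nat.lt_or_ge k (m+3) with h | h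
      · have hk2 : k = m + 2 := by omega
        subst hk2
        have : 2*(m+1)+2-2*(m+2) = 0 := by omega
        rw [this]
        simp
      · rw [ih (k-2) (by omega)]; simp


lemma keyI (s : ℕ) (K : ℝ) (r : ℤ) :
    (K+2)*(K+1)/2 * bb (s+2) r + (K+2)*(2*(s:ℝ)+1) * bb s (r-1)
      + 2*(s:ℝ)*((s:ℝ)-1) * bb (s-2) (r-2)
    = ((r:ℝ)+K+2)*((r:ℝ)+K+1)/2 * bb s r
      + ((r:ℝ)+K+1)*((s:ℝ)+K+3-(r:ℝ)) * bb s (r-1)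
      + ((s:ℝ)+K+4-(r:ℝ))*((s:ℝ)+K+3-(r:ℝ))/2 * bb s (r-2) := by
  rcases lt_or_ge r 0 with hr | hr
  · rw [bb_neg hr, bb_neg hr, bb_neg (show r-1 < 0 by omega),
      bb_neg (show r-2 < 0 by omega), bb_neg (show r-2 < 0 by omega)]
    ring
  rcases lt_or_ge ((s:ℤ)+2) r with hr2 | hr2
  · rw [bb_gt (show ((s+2:ℕ):ℤ) < r by push_cast; omega),
      bb_gt (show (s:ℤ) < r by omega),
      bb_gt (show (s:ℤ) < r-1 by omega), bb_gt (show (s:ℤ) < r-2 by omega),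
      bb_gt (show ((s-2:ℕ):ℤ) < r-2 by push_cast; omega)]
    ring
  -- now 0 ≤ r ≤ s+2
  rcases eq_or_lt_of_le hr with hr0 | hr1
  · -- r = 0
    have hB1 : bb (s+2) r = 1 := by
      rw [bb_nat (s := s+2) (t := 0) (by omega) (by omega)]; simp
    have hB4 : bb s r = 1 := by
      rw [bb_nat (s := s) (t := 0) (by omega) (by omega)]; simp
    rw [hB1, hB4, bb_neg (show r-1 < 0 by omega),
      bb_neg (show r-2 < 0 by omega), bb_neg (show r-2 < 0 by omega)]
    have : (r:ℝ) = 0 := by exact_mod_cast congrArg Int.cast hr0.symm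
    rw [this]; ring
  rcases eq_or_lt_of_le (show (1:ℤ) ≤ r by omega) with hr1' | hr2'
  · -- r = 1
    have hB1 : bb (s+2) r = (s:ℝ)+2 := by
      rw [bb_nat (s := s+2) (t := 1) (by omega) (by omega), Nat.choose_one_right]; push_cast; ring
    have hB4 : bb s r = (s:ℝ) := by
      rcases Nat.eq_zero_or_pos s with h | h
      · subst h; rw [bb_gt (by omega)]; simp
      · rw [bb_nat (s := s) (t := 1) (by omega) h, Nat.choose_one_right]
    have hB2 : bb s (r-1) = 1 := by
      rw [bb_nat (s := s) (t := 0) (by omega) (by omega)]; simp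
    rw [hB1, hB2, hB4, bb_neg (show r-2 < 0 by omega), bb_neg (show r-2 < 0 by omega)]
    have : (r:ℝ) = 1 := by exact_mod_cast congrArg Int.cast hr1'.symm
    rw [this]; ring
  -- 2 ≤ r ≤ s+2
  rcases eq_or_lt_of_le hr2 with hrtop | hrlt
  · -- r = s+2
    have hB1 : bb (s+2) r = 1 := by
      rw [bb_nat (s := s+2) (t := s+2) (by push_cast; omega) le_rfl, Nat.choose_self]; norm_num
    have hB5 : bb s (r-2) = 1 := by
      rw [bb_nat (s := s) (t := s) (by omega) le_rfl, Nat.choose_self]; norm_num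
    have hB3 : 2*(s:ℝ)*((s:ℝ)-1) * bb (s-2) (r-2) = 0 := by
      rcases Nat.lt_or_ge s 2 with h | h
      · interval_cases s <;> push_cast <;> ring
      · rw [bb_gt (show ((s-2:ℕ):ℤ) < r-2 by push_cast [h]; omega)]; ring
    rw [hB1, hB5, bb_gt (show (s:ℤ) < r by omega), bb_gt (show (s:ℤ) < r-1 by omega), hB3]
    have : (r:ℝ) = (s:ℝ)+2 := by exact_mod_cast congrArg Int.cast hrtop
    rw [this]; ring
  rcases eq_or_lt_of_le (show r ≤ (s:ℤ)+1 by omega) with hrtop1 | hrint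
  · -- r = s+1, s ≥ 1
    have hs1 : 1 ≤ s := by omega
    have hB1 : bb (s+2) r = (s:ℝ)+2 := by
      rw [bb_nat (s := s+2) (t := s+1) (by push_cast; omega) (by omega),
        show s+1 = (s+2) - 1 by omega, Nat.choose_symm (by omega), Nat.choose_one_right]
      push_cast; ring
    have hB2 : bb s (r-1) = 1 := by
      rw [bb_nat (s := s) (t := s) (by omega) le_rfl, Nat.choose_self]; norm_num
    have hB5 : bb s (r-2) = (s:ℝ) := by
      rw [bb_nat (s := s) (t := s-1) (by push_cast [hs1]; omega) (by omega),
        show s-1 = s - 1 by rfl, Nat.choose_symm (by omega), Nat.choose_one_right]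
    have hB3 : 2*(s:ℝ)*((s:ℝ)-1) * bb (s-2) (r-2) = 0 := by
      rcases Nat.lt_or_ge s 2 with h | h
      · interval_cases s <;> norm_num
      · rw [bb_gt (show ((s-2:ℕ):ℤ) < r-2 by push_cast [h]; omega)]; ring
    rw [hB1, hB2, hB5, hB3, bb_gt (show (s:ℤ) < r by omega)]
    have : (r:ℝ) = (s:ℝ)+1 := by exact_mod_cast congrArg Int.cast hrtop1
    rw [this]; ring
  · -- interior 2 ≤ r ≤ s
    obtain ⟨u, hu⟩ : ∃ u : ℕ, r = ((u:ℤ)+2) := ⟨(r-2).toNat, by omega⟩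
    have hus : u + 2 ≤ s := by omega
    have hs2 : 2 ≤ s := by omega
    have hB1 : bb (s+2) r = ((s+2).choose (u+2) : ℝ) :=
      bb_nat (by omega) (by omega)
    have hB4 : bb s r = (s.choose (u+2) : ℝ) := bb_nat (by omega) (by omega)
    have hB2 : bb s (r-1) = (s.choose (u+1) : ℝ) := bb_nat (by omega) (by omega)
    have hB5 : bb s (r-2) = (s.choose u : ℝ) := bb_nat (by omega) (by omega)
    have hB3 : bb (s-2) (r-2) = ((s-2).choose u : ℝ) :=
      bb_nat (by omega) (by omega)
    rw [hB1, hB2, hB3, hB4, hB5]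
    -- Nat identities
    have hP : (s+2).choose (u+2) = s.choose (u+2) + 2 * s.choose (u+1) + s.choose u := by
      rw [Nat.choose_succ_succ (s+1) (u+1), Nat.choose_succ_succ s u,
        Nat.choose_succ_succ s (u+1)]
      ring
    have h1 : s.choose (u+2) * (u+2) = s.choose (u+1) * (s - (u+1)) :=
      Nat.choose_succ_right_eq s (u+1)
    have h2 : s.choose (u+1) * (u+1) = s.choose u * (s - u) :=
      Nat.choose_succ_right_eq s u
    have hE : s * ((s-1) * ((s-2).choose u)) = (s - (u+1)) * ((s - u) * s.choose u) := by
      have e1 : (s-1) * (s-2).choose u = (s-1).choose u * ((s-1) - u) := by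
        have := Nat.add_one_mul_choose_eq (s-2) u
        rw [show s-2+1 = s - 1 by omega] at this
        rw [this, Nat.choose_succ_right_eq (s-1) u]
      have e2 : s * (s-1).choose u = s.choose u * (s - u) := by
        have := Nat.add_one_mul_choose_eq (s-1) u
        rw [show s-1+1 = s by omega] at this
        rw [this, Nat.choose_succ_right_eq s u]
      calc s * ((s-1) * ((s-2).choose u)) = (s * (s-1).choose u) * ((s-1) - u) := by
            rw [e1]; ring
        _ = (s.choose u * (s - u)) * ((s-1)-u) := by rw [e2]
        _ = (s - (u+1)) * ((s - u) * s.choose u) := by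
            rw [show (s-1)-u = s-(u+1) by omega]; ring
    -- cast to ℝ
    have c1 : (s.choose (u+2) : ℝ) * ((u:ℝ)+2) = (s.choose (u+1) : ℝ) * ((s:ℝ) - ((u:ℝ)+1)) := by
      have := congrArg (Nat.cast (R := ℝ)) h1
      push_cast [Nat.cast_sub (show u+1 ≤ s by omega)] at this
      linarith
    have c2 : (s.choose (u+1) : ℝ) * ((u:ℝ)+1) = (s.choose u : ℝ) * ((s:ℝ) - (u:ℝ)) := by
      have := congrArg (Nat.cast (R := ℝ)) h2
      push_cast [Nat.cast_sub (show u ≤ s by omega)] at this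
      linarith
    have c3 : (s:ℝ) * (((s:ℝ)-1) * ((s-2).choose u : ℝ)) = ((s:ℝ) - (u+1)) * (((s:ℝ) - u) * (s.choose u : ℝ)) := by
      have := congrArg (Nat.cast (R := ℝ)) hE
      push_cast [Nat.cast_sub (show u+1 ≤ s by omega), Nat.cast_sub (show u ≤ s by omega),
        Nat.cast_sub (show 1 ≤ s by omega)] at this
      linarith [this]
    have hr' : (r:ℝ) = (u:ℝ) + 2 := by exact_mod_cast congrArg Int.cast hu
    rw [hr', hP]
    push_cast
    linear_combination (-((u:ℝ) + 2*K + 5)/2) * c1 + ((3*(u:ℝ) - 3*(s:ℝ) + 7)/2 + K) * c2 + 2 * c3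

lemma main_lemma (P : ℕ → ℤ → ℝ)
    (h10 : P 1 0 = 1) (h1 : ∀ k : ℤ, k ≠ 0 → P 1 k = 0)
    (hrec : ∀ n : ℕ, 1 ≤ n → ∀ k : ℤ,
      P (n + 1) k = ((k : ℝ) + 2) * ((k : ℝ) + 1) / 2 * P n k
        + ((k : ℝ) + 1) * (2 * (n : ℝ) - (k : ℝ) + 1) * P n (k - 1)
        + (2 * (n : ℝ) - (k : ℝ) + 2) * (2 * (n : ℝ) - (k : ℝ) + 1) / 2 * P n (k - 2)) :
    ∀ n : ℕ, 1 ≤ n → ∀ j : ℤ,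
      P n j = ∑ k ∈ Finset.range n, (pp n k : ℝ) * bb (2*n-2-2*k) (j - (k:ℤ)) := by
  intro n hn
  induction n, hn using Nat.le_induction with
  | base =>
    intro j
    have hpp : pp 1 0 = 1 := rfl
    simp only [Finset.sum_range_one, hpp, Nat.cast_one, Nat.cast_zero, one_mul, sub_zero]
    norm_num
    rcases lt_trichotomy j 0 with h | h | h
    · rw [h1 j (by omega), bb_neg h]
    · subst h; rw [h10, bb_nat (t := 0) (by simp) (by omega)]; simp
    · rw [h1 j (by omega), bb_gt (by simpa using h)]
  | succ n hn ih =>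
    intro j
    obtain ⟨m, rfl⟩ : ∃ m, n = m + 1 := ⟨n - 1, by omega⟩
    rw [hrec (m+1) hn j, ih j, ih (j-1), ih (j-2)]
    have hRHS : ∑ k ∈ Finset.range (m+1+1), (pp (m+1+1) k : ℝ) * bb (2*(m+1+1)-2-2*k) (j - (k:ℤ))
        = ∑ k ∈ Finset.range (m+1), (pp (m+1) k : ℝ) *
            (((k:ℝ)+2)*((k:ℝ)+1)/2 * bb ((2*(m+1)-2-2*k)+2) (j - (k:ℤ))
             + ((k:ℝ)+2)*(2*((2*(m+1)-2-2*k:ℕ):ℝ)+1) * bb (2*(m+1)-2-2*k) (j - (k:ℤ) - 1)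
             + 2*((2*(m+1)-2-2*k:ℕ):ℝ)*(((2*(m+1)-2-2*k:ℕ):ℝ)-1) * bb ((2*(m+1)-2-2*k)-2) (j - (k:ℤ) - 2)) := by
      have hsplit : ∑ k ∈ Finset.range (m+1+1), (pp (m+1+1) k : ℝ) * bb (2*(m+1+1)-2-2*k) (j - (k:ℤ))
          = (∑ k ∈ Finset.range (m+2), ((Nat.choose (k+2) 2 * pp (m+1) k : ℕ) : ℝ) * bb (2*(m+2)-2-2*k) (j - (k:ℤ)))
          + (∑ k ∈ Finset.range (m+2), ((if k = 0 then 0 else (k+1) * (2*(2*(m+1)-2*k) + 1) * pp (m+1) (k-1) : ℕ) : ℝ) * bb (2*(m+2)-2-2*k) (j - (k:ℤ)))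
          + (∑ k ∈ Finset.range (m+2), ((if k ≤ 1 then 0 else 4 * Nat.choose (2*(m+1)+2-2*k) 2 * pp (m+1) (k-2) : ℕ) : ℝ) * bb (2*(m+2)-2-2*k) (j - (k:ℤ))) := by
        rw [← Finset.sum_add_distrib, ← Finset.sum_add_distrib]
        refine Finset.sum_congr rfl fun k _ => ?_
        have hppu : pp (m+1+1) k = Nat.choose (k+2) 2 * pp (m+1) k
            + (if k = 0 then 0 else (k+1) * (2*(2*(m+1)-2*k) + 1) * pp (m+1) (k-1))
            + (if k ≤ 1 then 0 else 4 * Nat.choose (2*(m+1)+2-2*k) 2 * pp (m+1) (k-2)) := rfl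
        rw [hppu]
        push_cast
        ring
      have hS1 : (∑ k ∈ Finset.range (m+2), ((Nat.choose (k+2) 2 * pp (m+1) k : ℕ) : ℝ) * bb (2*(m+2)-2-2*k) (j - (k:ℤ)))
          = ∑ k ∈ Finset.range (m+1), (pp (m+1) k : ℝ) *
              (((k:ℝ)+2)*((k:ℝ)+1)/2 * bb ((2*(m+1)-2-2*k)+2) (j - (k:ℤ))) := by
        rw [Finset.sum_range_succ, pp_zero (m+1) (m+1) le_rfl]
        norm_num
        refine Finset.sum_congr rfl fun k hk => ?_
        simp only [Finset.mem_range] at hk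
        rw [show 2*(m+2)-2-2*k = (2*(m+1)-2-2*k)+2 by omega]
        push_cast [Nat.cast_choose_two]
        ring
      have hS2 : (∑ k ∈ Finset.range (m+2), ((if k = 0 then 0 else (k+1) * (2*(2*(m+1)-2*k) + 1) * pp (m+1) (k-1) : ℕ) : ℝ) * bb (2*(m+2)-2-2*k) (j - (k:ℤ)))
          = ∑ k ∈ Finset.range (m+1), (pp (m+1) k : ℝ) *
              (((k:ℝ)+2)*(2*((2*(m+1)-2-2*k:ℕ):ℝ)+1) * bb (2*(m+1)-2-2*k) (j - (k:ℤ) - 1)) := by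
        rw [Finset.sum_range_succ']
        norm_num
        refine Finset.sum_congr rfl fun k hk => ?_
        simp only [Finset.mem_range] at hk
        rw [show 2*(m+2)-2-2*(k+1) = 2*(m+1)-2-2*k by omega,
          show 2*(m+1)-2*(k+1) = 2*(m+1)-2-2*k by omega,
          show (j - ((k:ℤ)+1)) = j - (k:ℤ) - 1 by ring]
        ring
      have hS3 : (∑ k ∈ Finset.range (m+2), ((if k ≤ 1 then 0 else 4 * Nat.choose (2*(m+1)+2-2*k) 2 * pp (m+1) (k-2) : ℕ) : ℝ) * bb (2*(m+2)-2-2*k) (j - (k:ℤ)))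
          = ∑ k ∈ Finset.range (m+1), (pp (m+1) k : ℝ) *
              (2*((2*(m+1)-2-2*k:ℕ):ℝ)*(((2*(m+1)-2-2*k:ℕ):ℝ)-1) * bb ((2*(m+1)-2-2*k)-2) (j - (k:ℤ) - 2)) := by
        rw [Finset.sum_range_succ', Finset.sum_range_succ']
        norm_num
        rw [Finset.sum_range_succ (n := m)]
        rw [show 2*(m+1)-2-2*m = 0 by omega]
        norm_num
        refine Finset.sum_congr rfl fun k hk => ?_
        simp only [Finset.mem_range] at hk
        rw [show 2*(m+2)-2-2*(k+1+1) = (2*(m+1)-2-2*k)-2 by omega,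
          show 2*(m+1)+2-2*(k+1+1) = 2*(m+1)-2-2*k by omega,
          show (k+1+1)-2 = k by omega,
          show (j - ((k:ℤ)+1+1)) = j - (k:ℤ) - 2 by ring,
          Nat.cast_choose_two]
        ring
      rw [hsplit, hS1, hS2, hS3, ← Finset.sum_add_distrib, ← Finset.sum_add_distrib]
      exact Finset.sum_congr rfl fun k _ => by ring
    rw [hRHS]
    rw [Finset.mul_sum, Finset.mul_sum, Finset.mul_sum, ← Finset.sum_add_distrib, ← Finset.sum_add_distrib]
    refine Finset.sum_congr rfl ?_
    intro k hk
    simp only [Finset.mem_range] at hk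
    have hs : ((2*(m+1)-2-2*k:ℕ):ℝ) = 2*((m:ℝ)+1)-2*(k:ℝ)-2 := by
      have h2 : 2*(m+1)-2-2*k + (2*k+2) = 2*(m+1) := by omega
      have := congrArg (Nat.cast (R := ℝ)) h2
      push_cast at this
      linarith
    have hkey := keyI (2*(m+1)-2-2*k) (k:ℝ) (j - (k:ℤ))
    rw [hs] at hkey
    push_cast at hkey ⊢
    rw [hs]
    have a3 : j - 1 - (k:ℤ) = j - (k:ℤ) - 1 := by ring
    have a4 : j - 2 - (k:ℤ) = j - (k:ℤ) - 2 := by ring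
    rw [a3, a4]
    linear_combination ((pp (m+1) k : ℝ)) * hkey.symm

theorem stmt6 (P : ℕ → ℤ → ℝ)
    (h10 : P 1 0 = 1) (h1 : ∀ k : ℤ, k ≠ 0 → P 1 k = 0)
    (hrec : ∀ n : ℕ, 1 ≤ n → ∀ k : ℤ,
      P (n + 1) k = ((k : ℝ) + 2) * ((k : ℝ) + 1) / 2 * P n k
        + ((k : ℝ) + 1) * (2 * (n : ℝ) - (k : ℝ) + 1) * P n (k - 1)
        + (2 * (n : ℝ) - (k : ℝ) + 2) * (2 * (n : ℝ) - (k : ℝ) + 1) / 2 * P n (k - 2)) :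
    ∃ p : ℕ → ℕ → ℕ, ∀ n : ℕ, 1 ≤ n →
      ∑ k ∈ Finset.range (2 * n - 1), C (P n k) * X ^ k =
        ∑ k ∈ Finset.range n, C ((p n k : ℝ)) * X ^ k * (1 + X) ^ (2 * n - 2 - 2 * k) := by
  have hP := main_lemma P h10 h1 hrec
  refine ⟨pp, fun n hn => ?_⟩
  ext m
  rw [finset_sum_coeff, finset_sum_coeff]
  have hL : ∑ k ∈ Finset.range (2*n-1), (C (P n (k:ℤ)) * X ^ k).coeff m
      = if m < 2*n-1 then P n (m:ℤ) else 0 := by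
    simp only [coeff_C_mul, coeff_X_pow, mul_ite, mul_one, mul_zero]
    rw [Finset.sum_ite_eq (Finset.range (2*n-1)) m (fun k => P n (k:ℤ))]
    simp [Finset.mem_range]
  have hR : ∑ k ∈ Finset.range n, (C ((pp n k : ℝ)) * X ^ k * (1 + X) ^ (2*n-2-2*k)).coeff m
      = ∑ k ∈ Finset.range n, (pp n k : ℝ) * bb (2*n-2-2*k) ((m:ℤ) - (k:ℤ)) := by
    refine Finset.sum_congr rfl fun k hk => ?_
    simp only [Finset.mem_range] at hk
    rw [mul_right_comm, coeff_mul_X_pow', coeff_C_mul, add_comm (1 : ℝ[X]) X]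
    rcases le_or_gt k m with hkm | hkm
    · rw [if_pos hkm]
      have : ((X + 1 : ℝ[X]) ^ (2*n-2-2*k)).coeff (m - k) = ((2*n-2-2*k).choose (m-k) : ℝ) := by
        exact_mod_cast coeff_X_add_one_pow ℝ (2*n-2-2*k) (m-k)
      rw [this]
      rcases le_or_gt ((m:ℤ) - (k:ℤ)) ((2*n-2-2*k : ℕ) : ℤ) with hle | hgt
      · rw [bb_nat (t := m - k) (by omega) (by omega)]
      · rw [bb_gt hgt, Nat.choose_eq_zero_of_lt (by omega)]
        norm_num
    · rw [if_neg (by omega), bb_neg (by omega)]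
      ring
  rw [hL, hR]
  rcases lt_or_ge m (2*n-1) with hm | hm
  · rw [if_pos hm]
    exact hP n hn (m:ℤ)
  · rw [if_neg (by omega)]
    symm
    refine Finset.sum_eq_zero fun k hk => ?_
    simp only [Finset.mem_range] at hk
    rw [bb_gt (by omega)]
    ring
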